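/- (Theorem 1.6(a)) Let A, B be subspaces of E and o an E-orbit contained in X_A. Then [[oB]], the ℂ-span of 𝓑_{oB} in 𝓕, is a right ideal of the algebra (𝓕, ⋆); more precisely, for any E-orbit 𝒪 in X²_{AB} with p₁𝒪 = o and any ε₁ ∈ (A∩B)*, one has [[oB]] = [𝒪]^{ε₁} ⋆ 𝓕. -/

import Mathlib

open scoped Classical

set_option linter.unusedSectionVars false

noncomputable section

namespace Lusztig

variable (E X : Type) [AddCommGroup E] [Module (ZMod 2) E] [Fintype E]
  [Fintype X] [AddAction E X]

/-- The stabilizer of `x` in `E`, as a subset of `E`. -/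
def stabSet (x : X) : Set E := {e : E | e +ᵥ x = x}

/-- `X_A`: the set of points of `X` whose stabilizer in `E` equals `A`. -/
def XA (A : Submodule (ZMod 2) E) : Set X := {x : X | stabSet E X x = (A : Set E)}

/-- `X²_{AB} = X_A × X_B`. -/
def X2 (A B : Submodule (ZMod 2) E) : Set (X × X) := (XA E X A) ×ˢ (XA E X B)

/-- The `E`-orbit of `x` in `X`. -/
def orb (x : X) : Set X := {y : X | ∃ e : E, y = e +ᵥ x}

/-- The `E`-orbit of `(x,y)` for the diagonal action of `E` on `X × X`. -/
def orb2 (x y : X) : Set (X × X) := {q : X × X | ∃ e : E, q = (e +ᵥ x, e +ᵥ y)}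

/-- `O` is an `E`-orbit (for the diagonal action) contained in `X²_{AB}`. -/
def IsOrb2 (A B : Submodule (ZMod 2) E) (O : Set (X × X)) : Prop :=
  ∃ x y : X, x ∈ XA E X A ∧ y ∈ XA E X B ∧ O = orb2 E X x y

/-- The `E × B`-orbit of `(x,y)` for the action `(e,b)·(x,y) = (e+b+x, e+y)`. -/
def orbEB (B : Submodule (ZMod 2) E) (x y : X) : Set (X × X) :=
  {q : X × X | ∃ e b : E, b ∈ B ∧ q = ((e + b) +ᵥ x, e +ᵥ y)}

/-- `M` is an `E × B`-orbit contained in `X²_{AC}` for the action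
`(e,b)·(x,y) = (e+b+x, e+y)`. -/
def IsOrbEB (A B C : Submodule (ZMod 2) E) (M : Set (X × X)) : Prop :=
  ∃ x y : X, x ∈ XA E X A ∧ y ∈ XA E X C ∧ M = orbEB E X B x y

/-- Image under the first projection. -/
def p1 (S : Set (X × X)) : Set X := Prod.fst '' S

/-- Image under the second projection. -/
def p2 (S : Set (X × X)) : Set X := Prod.snd '' S

/-- `U_{ABC} = {(a,b,c) ∈ A × B × C : a + b + c = 0}`. -/
def UABC (A B C : Submodule (ZMod 2) E) : Set (E × E × E) :=
  {t : E × E × E | t.1 ∈ A ∧ t.2.1 ∈ B ∧ t.2.2 ∈ C ∧ t.1 + t.2.1 + t.2.2 = 0}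

/-- `X̄_C`: the set of `E`-orbits contained in `X_C`. -/
def barX (C : Submodule (ZMod 2) E) : Set (Set X) :=
  {s : Set X | ∃ x ∈ XA E X C, s = orb E X x}

/-- The dual (space of linear forms `P → ℤ/2`) of a subspace `P` of `E`. -/
abbrev Dl (P : Submodule (ZMod 2) E) : Type := ↥P →ₗ[ZMod 2] ZMod 2

/-- Restriction of a linear form along an inclusion of subspaces. -/
def res {P Q : Submodule (ZMod 2) E} (h : P ≤ Q) (φ : Dl E Q) : Dl E P :=
  φ.comp (Submodule.inclusion h)

theorem leAB (A B C : Submodule (ZMod 2) E) : A ⊓ B ⊓ C ≤ A ⊓ B := inf_le_left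
theorem leBC (A B C : Submodule (ZMod 2) E) : A ⊓ B ⊓ C ≤ B ⊓ C :=
  le_inf (inf_le_left.trans inf_le_right) inf_le_right
theorem leAC (A B C : Submodule (ZMod 2) E) : A ⊓ B ⊓ C ≤ A ⊓ C :=
  le_inf (inf_le_left.trans inf_le_left) inf_le_right
theorem leBA (A B : Submodule (ZMod 2) E) : A ⊓ B ≤ B ⊓ A := le_inf inf_le_right inf_le_left

/-- The convolution product `𝓕_{AB} × 𝓕_{BC} → 𝓕_{AC}`. -/
def conv (A B C : Submodule (ZMod 2) E)
    (f₁ : (X × X) × Dl E (A ⊓ B) → ℂ) (f₂ : (X × X) × Dl E (B ⊓ C) → ℂ) :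
    (X × X) × Dl E (A ⊓ C) → ℂ :=
  fun p =>
    (∑ᶠ (y : X) (_ : y ∈ XA E X B) (ε₁ : Dl E (A ⊓ B)) (ε₂ : Dl E (B ⊓ C))
        (_ : res E (leAB E A B C) ε₁ + res E (leBC E A B C) ε₂
              + res E (leAC E A B C) p.2 = 0),
        f₁ ((p.1.1, y), ε₁) * f₂ ((y, p.1.2), ε₂)) *
      (Nat.card ↥(A ⊓ B ⊓ C) : ℂ) / (Nat.card ↥(A ⊓ C) : ℂ)

/-- The defining conditions for membership in `𝓕_{AB}`: supported on `X²_{AB}` and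
invariant under the diagonal `E`-action. -/
def MemF (A B : Submodule (ZMod 2) E) (f : (X × X) × Dl E (A ⊓ B) → ℂ) : Prop :=
  (∀ p : (X × X) × Dl E (A ⊓ B), p.1 ∉ X2 E X A B → f p = 0) ∧
  (∀ (e : E) (x y : X) (ε : Dl E (A ⊓ B)), f ((e +ᵥ x, e +ᵥ y), ε) = f ((x, y), ε))

/-- `𝓕_{AB}` as a subspace of the space of all functions. -/
def FAB (A B : Submodule (ZMod 2) E) : Submodule ℂ ((X × X) × Dl E (A ⊓ B) → ℂ) where
  carrier := {f | MemF E X A B f}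
  add_mem' := by
    intro a b ha hb
    exact ⟨fun p hp => by simp [ha.1 p hp, hb.1 p hp],
      fun e x y ε => by simp [Pi.add_apply, ha.2 e x y ε, hb.2 e x y ε]⟩
  zero_mem' := ⟨fun p hp => rfl, fun e x y ε => rfl⟩
  smul_mem' := by
    intro c a ha
    exact ⟨fun p hp => by simp [Pi.smul_apply, ha.1 p hp],
      fun e x y ε => by simp [Pi.smul_apply, ha.2 e x y ε]⟩

/-- `[Ξ]^ε`. -/
def br (A B : Submodule (ZMod 2) E) (Ξ : Set (X × X)) (ε : Dl E (A ⊓ B)) :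
    (X × X) × Dl E (A ⊓ B) → ℂ :=
  fun p => if p.1 ∈ Ξ ∧ p.2 = ε then 1 else 0

/-- The ambient space of `𝓕 = ⊕_{A,B} 𝓕_{AB}` (all summands at once). -/
abbrev FF : Type := ∀ A B : Submodule (ZMod 2) E, (X × X) × Dl E (A ⊓ B) → ℂ

/-- The embedding of the `(A,B)` summand into `𝓕`. -/
def emb (A B : Submodule (ZMod 2) E) (f : (X × X) × Dl E (A ⊓ B) → ℂ) : FF E X :=
  fun A' B' p =>
    if h : A = A' ∧ B = B' then f (p.1, cast (by rw [h.1, h.2]) p.2) else 0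

/-- `𝓕` as a subspace of `FF`: componentwise supported on `X²_{AB}` and `E`-invariant. -/
def FFsub : Submodule ℂ (FF E X) where
  carrier := {g | ∀ A B, MemF E X A B (g A B)}
  add_mem' := by
    intro a b ha hb A B
    exact ⟨fun p hp => by simp [(ha A B).1 p hp, (hb A B).1 p hp],
      fun e x y ε => by simp [(ha A B).2 e x y ε, (hb A B).2 e x y ε]⟩
  zero_mem' := fun A B => ⟨fun p hp => rfl, fun e x y ε => rfl⟩
  smul_mem' := by
    intro c a ha A B
    exact ⟨fun p hp => by simp [(ha A B).1 p hp],
      fun e x y ε => by simp [(ha A B).2 e x y ε]⟩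

/-- The product on `𝓕` (zero between summands `𝓕_{AB}`, `𝓕_{B'C}` with `B ≠ B'`). -/
def mulFF (g h : FF E X) : FF E X :=
  fun A C => ∑ᶠ B : Submodule (ZMod 2) E, conv E X A B C (g A B) (h B C)

/-- The diagonal `Δ_A ⊆ X²_{AA}`. -/
def diagSet (A : Submodule (ZMod 2) E) : Set (X × X) :=
  {q : X × X | q.1 ∈ XA E X A ∧ q.2 = q.1}

/-- The element `∑_A [Δ_A]^0` of `𝓕`. -/
def unitFF : FF E X :=
  ∑ᶠ A : Submodule (ZMod 2) E, emb E X A A (br E X A A (diagSet E X A) 0)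

/-- The map `f ↦ f^#` on `𝓕`. -/
def shFF (g : FF E X) : FF E X :=
  fun A B p => g B A ((p.1.2, p.1.1), res E (leBA E B A) p.2)

/-- `𝒪 • 𝒪'`. -/
def bullet (O O' : Set (X × X)) : Set (X × X) :=
  {q : X × X | ∃ y : X, (q.1, y) ∈ O ∧ (y, q.2) ∈ O'}

/-- `∑_{ε ∈ α̃} [𝓜]^ε ∈ 𝓕_{AC}`, where `α̃` is the fibre of
`(A∩C)* → (A∩B∩C)*` over `α`. -/
def bSum (A B C : Submodule (ZMod 2) E) (M : Set (X × X)) (α : Dl E (A ⊓ B ⊓ C)) :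
    (X × X) × Dl E (A ⊓ C) → ℂ :=
  ∑ᶠ (ε : Dl E (A ⊓ C)) (_ : res E (leAC E A B C) ε = α), br E X A C M ε

/-- The set `𝓑_{oBC} ⊆ 𝓕` (embedded in `FF`). -/
def BoBC (A B C : Submodule (ZMod 2) E) (o : Set X) : Set (FF E X) :=
  {g | ∃ (M : Set (X × X)) (α : Dl E (A ⊓ B ⊓ C)),
      IsOrbEB E X A B C M ∧ p1 X M = o ∧ g = emb E X A C (bSum E X A B C M α)}

/-- The set `𝓑_{oB} = ⊔_C 𝓑_{oBC}`. -/
def BoB (A B : Submodule (ZMod 2) E) (o : Set X) : Set (FF E X) :=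
  ⋃ C : Submodule (ZMod 2) E, BoBC E X A B C o

/-- `[[oB]]`, the `ℂ`-span of `𝓑_{oB}`. -/
def ooB (A B : Submodule (ZMod 2) E) (o : Set X) : Submodule ℂ (FF E X) :=
  Submodule.span ℂ (BoB E X A B o)

/-! ### Auxiliary infrastructure -/

instance (P : Submodule (ZMod 2) E) : Finite (Dl E P) :=
  Finite.of_injective (fun f => (f : ↥P → ZMod 2)) DFunLike.coe_injective

noncomputable instance (P : Submodule (ZMod 2) E) : Fintype (Dl E P) :=
  Fintype.ofFinite _

noncomputable instance : Fintype (Submodule (ZMod 2) E) :=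
  Fintype.ofFinite _

lemma m2_add_self {M : Type*} [AddCommGroup M] [Module (ZMod 2) M] (a : M) :
    a + a = 0 := by
  have h2 : (2 : ZMod 2) = 0 := rfl
  calc a + a = (2 : ZMod 2) • a := (two_smul _ a).symm
    _ = 0 := by rw [h2, zero_smul]

lemma vadd_vadd_self (e : E) (x : X) : e +ᵥ (e +ᵥ x) = x := by
  rw [← add_vadd, m2_add_self, zero_vadd]

lemma stab_vadd (e : E) (x : X) : stabSet E X (e +ᵥ x) = stabSet E X x := by
  ext f
  simp only [stabSet, Set.mem_setOf_eq]
  constructor <;> intro h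
  · have : f +ᵥ (e +ᵥ x) = e +ᵥ (f +ᵥ x) := by
      rw [← add_vadd, ← add_vadd, add_comm]
    rw [this] at h
    exact vadd_left_cancel e h
  · rw [← add_vadd, add_comm, add_vadd, h]

lemma mem_XA_vadd_iff (A : Submodule (ZMod 2) E) (e : E) (x : X) :
    e +ᵥ x ∈ XA E X A ↔ x ∈ XA E X A := by
  simp only [XA, Set.mem_setOf_eq, stab_vadd]

lemma vadd_mem_XA (A : Submodule (ZMod 2) E) {x : X} (hx : x ∈ XA E X A) (e : E) :
    e +ᵥ x ∈ XA E X A := (mem_XA_vadd_iff E X A e x).2 hx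

lemma vadd_eq_self (A : Submodule (ZMod 2) E) {x : X} (hx : x ∈ XA E X A)
    {a : E} (ha : a ∈ A) : a +ᵥ x = x := by
  have : a ∈ stabSet E X x := by rw [XA, Set.mem_setOf_eq] at hx; rw [hx]; exact ha
  exact this

lemma mem_orb_self (x : X) : x ∈ orb E X x := ⟨0, (zero_vadd E x).symm⟩

lemma orb_eq_of_mem {x y : X} (h : y ∈ orb E X x) : orb E X y = orb E X x := by
  obtain ⟨e, rfl⟩ := h
  ext z
  constructor
  · rintro ⟨f, rfl⟩; exact ⟨f + e, by rw [add_vadd]⟩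
  · rintro ⟨f, rfl⟩
    exact ⟨f + e, by rw [add_vadd, vadd_vadd_self]⟩

lemma p1_orbEB (B : Submodule (ZMod 2) E) (x y : X) :
    p1 X (orbEB E X B x y) = orb E X x := by
  ext z
  constructor
  · rintro ⟨⟨u, v⟩, ⟨e, b, hb, hq⟩, rfl⟩
    obtain ⟨h1, _⟩ := Prod.mk.injEq .. ▸ hq
    exact ⟨e + b, by rw [hq]⟩
  · rintro ⟨e, rfl⟩
    exact ⟨((e + 0) +ᵥ x, e +ᵥ y), ⟨e, 0, zero_mem B, rfl⟩, by simp⟩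

lemma p1_orb2 (x y : X) : p1 X (orb2 E X x y) = orb E X x := by
  ext z
  constructor
  · rintro ⟨⟨u, v⟩, ⟨e, hq⟩, rfl⟩
    exact ⟨e, by rw [hq]⟩
  · rintro ⟨e, rfl⟩
    exact ⟨(e +ᵥ x, e +ᵥ y), ⟨e, rfl⟩, rfl⟩

lemma orbEB_eq_of_mem {B : Submodule (ZMod 2) E} {x y x' y' : X}
    (h : (x', y') ∈ orbEB E X B x y) : orbEB E X B x' y' = orbEB E X B x y := by
  obtain ⟨e, b, hb, hq⟩ := h
  obtain ⟨hx', hy'⟩ : x' = (e + b) +ᵥ x ∧ y' = e +ᵥ y := by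
    constructor
    · exact congrArg Prod.fst hq
    · exact congrArg Prod.snd hq
  subst hx'; subst hy'
  ext ⟨u, v⟩
  constructor
  · rintro ⟨f, c, hc, hq'⟩
    refine ⟨f + e, c + b, add_mem hc hb, ?_⟩
    have h1 : ((f + e) + (c + b)) +ᵥ x = (f + c) +ᵥ ((e + b) +ᵥ x) := by
      rw [← add_vadd]; congr 1; abel
    have h2 : (f + e) +ᵥ y = f +ᵥ (e +ᵥ y) := by
      rw [← add_vadd]
    rw [hq', h1, h2]
  · rintro ⟨f, c, hc, hq'⟩
    refine ⟨f + e, c + b, add_mem hc hb, ?_⟩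
    have h1 : ((f + e) + (c + b)) +ᵥ ((e + b) +ᵥ x) = (f + c) +ᵥ x := by
      rw [← add_vadd]
      congr 1
      have h3 : f + e + (c + b) + (e + b) = f + c + (e + e) + (b + b) := by abel
      rw [h3, m2_add_self, m2_add_self, add_zero, add_zero]
    have h2 : (f + e) +ᵥ (e +ᵥ y) = f +ᵥ y := by
      rw [← add_vadd]
      congr 1
      have h3 : f + e + e = f + (e + e) := by abel
      rw [h3, m2_add_self, add_zero]
    rw [hq', h1, h2]

lemma mem_orbEB_self (B : Submodule (ZMod 2) E) (x y : X) :
    (x, y) ∈ orbEB E X B x y :=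
  ⟨0, 0, zero_mem B, by simp⟩

lemma orbEB_diag_mem {B : Submodule (ZMod 2) E} {x y x' y' : X}
    (h : (x', y') ∈ orbEB E X B x y) (e : E) :
    (e +ᵥ x', e +ᵥ y') ∈ orbEB E X B x y := by
  rw [← orbEB_eq_of_mem E X h]
  exact ⟨e, 0, zero_mem B, by simp⟩

lemma orbEB_bvadd_mem {B : Submodule (ZMod 2) E} {x y x' y' : X}
    (h : (x', y') ∈ orbEB E X B x y) {b : E} (hb : b ∈ B) :
    (b +ᵥ x', y') ∈ orbEB E X B x y := by
  rw [← orbEB_eq_of_mem E X h]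
  exact ⟨0, b, hb, by simp⟩

lemma orbEB_snd_mem {A B C : Submodule (ZMod 2) E} {x y : X}
    (hy : y ∈ XA E X C) {q : X × X} (hq : q ∈ orbEB E X B x y) :
    q.2 ∈ XA E X C := by
  obtain ⟨e, b, hb, hq'⟩ := hq
  rw [hq']
  exact vadd_mem_XA E X C hy e

lemma mem_p1 {S : Set (X × X)} {q : X × X} (hq : q ∈ S) : q.1 ∈ p1 X S :=
  ⟨q, hq, rfl⟩

/-! ### orb2 lemmas -/

lemma orb2_eq_of_mem {x y x' y' : X} (h : (x', y') ∈ orb2 E X x y) :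
    orb2 E X x' y' = orb2 E X x y := by
  obtain ⟨e, hq⟩ := h
  obtain ⟨hx', hy'⟩ : x' = e +ᵥ x ∧ y' = e +ᵥ y :=
    ⟨congrArg Prod.fst hq, congrArg Prod.snd hq⟩
  subst hx'; subst hy'
  ext ⟨u, v⟩
  constructor
  · rintro ⟨f, hq'⟩
    refine ⟨f + e, ?_⟩
    rw [hq']; simp [add_vadd]
  · rintro ⟨f, hq'⟩
    refine ⟨f + e, ?_⟩
    rw [hq']
    have h1 : (f + e) +ᵥ (e +ᵥ x) = f +ᵥ x := by
      rw [← add_vadd]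
      congr 1
      have h3 : f + e + e = f + (e + e) := by abel
      rw [h3, m2_add_self, add_zero]
    have h2 : (f + e) +ᵥ (e +ᵥ y) = f +ᵥ y := by
      rw [← add_vadd]
      congr 1
      have h3 : f + e + e = f + (e + e) := by abel
      rw [h3, m2_add_self, add_zero]
    rw [h1, h2]

lemma orb2_snd_mem {B : Submodule (ZMod 2) E} {x y : X}
    (hy : y ∈ XA E X B) {q : X × X} (hq : q ∈ orb2 E X x y) :
    q.2 ∈ XA E X B := by
  obtain ⟨e, hq'⟩ := hq
  rw [hq']
  exact vadd_mem_XA E X B hy e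

/-! ### res lemmas -/

lemma res_apply {P Q : Submodule (ZMod 2) E} (h : P ≤ Q) (φ : Dl E Q)
    (u : ↥P) : res E h φ u = φ ⟨u.1, h u.2⟩ := rfl

lemma res_add {P Q : Submodule (ZMod 2) E} (h : P ≤ Q) (φ ψ : Dl E Q) :
    res E h (φ + ψ) = res E h φ + res E h ψ := by
  ext u; rfl

/-- Extension of a linear form vanishing on `P ⊓ Q` from `Q` to all of `E`,
vanishing on `P`. -/
lemma EXT (P Q : Submodule (ZMod 2) E) (φ : Dl E Q)
    (h0 : ∀ v : E, v ∈ P → ∀ hQ : v ∈ Q, φ ⟨v, hQ⟩ = 0) :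
    ∃ ψ : E →ₗ[ZMod 2] ZMod 2,
      (∀ v ∈ P, ψ v = 0) ∧ (∀ (v) (hv : v ∈ Q), ψ v = φ ⟨v, hv⟩) := by
  classical
  set ρ : E →ₗ[ZMod 2] E ⧸ P := P.mkQ with hρ
  set P' : Submodule (ZMod 2) ↥Q := Submodule.comap Q.subtype P with hP'
  have hker : P' ≤ LinearMap.ker φ := by
    intro v hv
    simp only [LinearMap.mem_ker]
    have : φ ⟨(v : E), v.2⟩ = 0 := h0 v hv v.2
    simpa using this
  set χ₀ : (↥Q ⧸ P') →ₗ[ZMod 2] ZMod 2 := P'.liftQ φ hker with hχ₀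
  set j : (↥Q ⧸ P') →ₗ[ZMod 2] (E ⧸ P) :=
    P'.mapQ P Q.subtype (fun v hv => hv) with hj
  have hjinj : LinearMap.ker j = ⊥ := by
    rw [Submodule.eq_bot_iff]
    intro w hw
    induction w using Submodule.Quotient.induction_on with
    | _ v =>
      rw [LinearMap.mem_ker, Submodule.mapQ_apply] at hw
      rw [Submodule.Quotient.mk_eq_zero] at hw ⊢
      exact hw
  obtain ⟨ℓ, hℓ⟩ := LinearMap.exists_leftInverse_of_injective j hjinj
  refine ⟨(χ₀ ∘ₗ ℓ) ∘ₗ ρ, ?_, ?_⟩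
  · intro v hv
    have : ρ v = 0 := by
      rw [hρ, Submodule.mkQ_apply, Submodule.Quotient.mk_eq_zero]; exact hv
    simp [this]
  · intro v hv
    have h1 : ρ v = j (Submodule.Quotient.mk ⟨v, hv⟩) := by
      rw [hj, Submodule.mapQ_apply]; rfl
    have h2 : ℓ (j (Submodule.Quotient.mk ⟨v, hv⟩)) =
        Submodule.Quotient.mk ⟨v, hv⟩ := by
      have := congrArg (fun (m : (↥Q ⧸ P') →ₗ[ZMod 2] (↥Q ⧸ P')) =>
        m (Submodule.Quotient.mk ⟨v, hv⟩)) hℓ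
      simpa using this
    simp only [LinearMap.comp_apply, h1, h2, hχ₀, Submodule.liftQ_apply]

/-- Linear forms extend along inclusions of subspaces. -/
lemma resSurj {P Q : Submodule (ZMod 2) E} (h : P ≤ Q) (φ : Dl E P) :
    ∃ ψ : Dl E Q, res E h ψ = φ := by
  obtain ⟨g, hg⟩ := LinearMap.exists_extend (V' := ZMod 2) φ
  refine ⟨g ∘ₗ Q.subtype, ?_⟩
  ext u
  have := congrArg (fun (m : ↥P →ₗ[ZMod 2] ZMod 2) => m u) hg
  simpa [res_apply] using this

/-- The key form `δ₁` used for the `ε`-independence argument. -/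
lemma exists_delta (A B C D : Submodule (ZMod 2) E) (δ : Dl E (A ⊓ D))
    (hδ : ∀ (u : E) (hu : u ∈ A ⊓ B ⊓ D), δ ⟨u, ⟨hu.1.1, hu.2⟩⟩ = 0) :
    ∃ δ₁ : Dl E (A ⊓ C),
      res E (leAC E A B C) δ₁ = 0 ∧
      res E (leAB E A C D) δ₁ = res E (leAC E A C D) δ := by
  -- EXT with P := A ⊓ B ⊓ C (or just B), Q := A ⊓ C ⊓ D, φ := δ restricted.
  set Q : Submodule (ZMod 2) E := A ⊓ C ⊓ D with hQ
  have hQle : Q ≤ A ⊓ D := leAC E A C D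
  set φ : Dl E Q := res E hQle δ with hφ
  have hside : ∀ v : E, v ∈ A ⊓ B ⊓ C → ∀ hQ' : v ∈ Q, φ ⟨v, hQ'⟩ = 0 := by
    intro v hv hvQ
    exact hδ v ⟨⟨hv.1.1, hv.1.2⟩, hvQ.2⟩
  obtain ⟨ψ, hψP, hψQ⟩ := EXT E (A ⊓ B ⊓ C) Q φ hside
  refine ⟨ψ ∘ₗ (A ⊓ C).subtype, ?_, ?_⟩
  · ext u
    have hu : (u : E) ∈ A ⊓ B ⊓ C := u.2
    simpa [res_apply] using hψP u hu
  · ext u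
    have hu : (u : E) ∈ Q := u.2
    have := hψQ u hu
    simp only [res_apply, LinearMap.comp_apply, Submodule.coe_subtype] at this ⊢
    rw [this]

/-! ### Normal forms for the various finsums -/

lemma conv_apply (A B C : Submodule (ZMod 2) E)
    (f₁ : (X × X) × Dl E (A ⊓ B) → ℂ) (f₂ : (X × X) × Dl E (B ⊓ C) → ℂ)
    (p : (X × X) × Dl E (A ⊓ C)) :
    conv E X A B C f₁ f₂ p =
      (∑ y : X, ∑ ε₁ : Dl E (A ⊓ B), ∑ ε₂ : Dl E (B ⊓ C),
        if y ∈ XA E X B ∧ res E (leAB E A B C) ε₁ + res E (leBC E A B C) ε₂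
              + res E (leAC E A B C) p.2 = 0
        then f₁ ((p.1.1, y), ε₁) * f₂ ((y, p.1.2), ε₂) else 0) *
      (Nat.card ↥(A ⊓ B ⊓ C) : ℂ) / (Nat.card ↥(A ⊓ C) : ℂ) := by
  rw [conv]
  congr 2
  rw [finsum_eq_sum_of_fintype]
  refine Finset.sum_congr rfl fun y _ => ?_
  rw [finsum_eq_if]
  by_cases hy : y ∈ XA E X B
  · rw [if_pos hy, finsum_eq_sum_of_fintype]
    refine Finset.sum_congr rfl fun ε₁ _ => ?_
    rw [finsum_eq_sum_of_fintype]
    refine Finset.sum_congr rfl fun ε₂ _ => ?_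
    rw [finsum_eq_if]
    by_cases hc : res E (leAB E A B C) ε₁ + res E (leBC E A B C) ε₂
        + res E (leAC E A B C) p.2 = 0
    · rw [if_pos hc, if_pos ⟨hy, hc⟩]
    · rw [if_neg hc, if_neg fun h => hc h.2]
  · rw [if_neg hy]
    symm
    refine Finset.sum_eq_zero fun ε₁ _ => Finset.sum_eq_zero fun ε₂ _ => ?_
    rw [if_neg fun h => hy h.1]

lemma sum_indicator_count {τ : Type*} [Fintype τ] (p : τ → Prop)
    [DecidablePred p] (c : ℂ) :
    (∑ a : τ, if p a then c else 0) = (Nat.card {a : τ // p a} : ℂ) * c := by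
  classical
  rw [Finset.sum_ite, Finset.sum_const, Finset.sum_const_zero, add_zero,
    nsmul_eq_mul]
  congr 2
  rw [Nat.card_eq_fintype_card, Fintype.card_subtype]

lemma br_apply (A B : Submodule (ZMod 2) E) (Ξ : Set (X × X))
    (ε : Dl E (A ⊓ B)) (p : (X × X) × Dl E (A ⊓ B)) :
    br E X A B Ξ ε p = if p.1 ∈ Ξ ∧ p.2 = ε then 1 else 0 := rfl

lemma bSum_apply (A B C : Submodule (ZMod 2) E) (M : Set (X × X))
    (α : Dl E (A ⊓ B ⊓ C)) (q : X × X) (ε : Dl E (A ⊓ C)) :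
    bSum E X A B C M α (q, ε) =
      if q ∈ M ∧ res E (leAC E A B C) ε = α then 1 else 0 := by
  have h1 : bSum E X A B C M α =
      ∑ ε' : Dl E (A ⊓ C),
        if res E (leAC E A B C) ε' = α then br E X A C M ε' else 0 := by
    rw [bSum, finsum_eq_sum_of_fintype]
    exact Finset.sum_congr rfl fun ε' _ => finsum_eq_if
  rw [h1, Finset.sum_apply]
  rw [Finset.sum_eq_single ε]
  · by_cases hM : q ∈ M <;> by_cases hr : res E (leAC E A B C) ε = α <;>
      simp [hM, hr, br_apply, apply_ite (fun g : (X × X) × Dl E (A ⊓ C) → ℂ => g (q, ε))]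
  · intro ε' _ hne
    by_cases hr : res E (leAC E A B C) ε' = α <;>
      simp [hr, br_apply, apply_ite (fun g : (X × X) × Dl E (A ⊓ C) → ℂ => g (q, ε)), Ne.symm hne]
  · intro h; exact absurd (Finset.mem_univ ε) h

lemma emb_same (A B : Submodule (ZMod 2) E) (f : (X × X) × Dl E (A ⊓ B) → ℂ) :
    emb E X A B f A B = f := by
  funext p
  rw [emb, dif_pos ⟨rfl, rfl⟩]
  exact rfl

lemma emb_ne {A B A' B' : Submodule (ZMod 2) E}
    (f : (X × X) × Dl E (A ⊓ B) → ℂ) (h : ¬(A = A' ∧ B = B')) :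
    emb E X A B f A' B' = fun _ => 0 := by
  funext p
  rw [emb, dif_neg h]

lemma mulFF_apply (g h : FF E X) (A C : Submodule (ZMod 2) E) :
    mulFF E X g h A C =
      ∑ B : Submodule (ZMod 2) E, conv E X A B C (g A B) (h B C) := by
  simp only [mulFF]
  exact finsum_eq_sum_of_fintype _

/-! ### Linearity of conv -/

lemma conv_zeroL (A B C : Submodule (ZMod 2) E)
    {f₁ : (X × X) × Dl E (A ⊓ B) → ℂ} (h : ∀ q, f₁ q = 0)
    (f₂ : (X × X) × Dl E (B ⊓ C) → ℂ) (p : (X × X) × Dl E (A ⊓ C)) :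
    conv E X A B C f₁ f₂ p = 0 := by
  simp [conv_apply, h]

lemma conv_zeroR (A B C : Submodule (ZMod 2) E)
    (f₁ : (X × X) × Dl E (A ⊓ B) → ℂ)
    {f₂ : (X × X) × Dl E (B ⊓ C) → ℂ} (h : ∀ q, f₂ q = 0)
    (p : (X × X) × Dl E (A ⊓ C)) :
    conv E X A B C f₁ f₂ p = 0 := by
  simp [conv_apply, h]

lemma add_div_aux (S T₁ T₂ k k' : ℂ) (h : S = T₁ + T₂) :
    S * k / k' = T₁ * k / k' + T₂ * k / k' := by rw [h]; ring

lemma smul_div_aux (c S T k k' : ℂ) (h : S = c * T) :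
    S * k / k' = c * (T * k / k') := by rw [h]; ring

lemma conv_addL (A B C : Submodule (ZMod 2) E)
    (f₁ g₁ : (X × X) × Dl E (A ⊓ B) → ℂ) (f₂ : (X × X) × Dl E (B ⊓ C) → ℂ) :
    conv E X A B C (f₁ + g₁) f₂ = conv E X A B C f₁ f₂ + conv E X A B C g₁ f₂ := by
  funext p
  simp only [conv_apply, Pi.add_apply]
  refine add_div_aux _ _ _ _ _ ?_
  refine Eq.trans ?_ Finset.sum_add_distrib
  refine Finset.sum_congr rfl fun y _ => ?_
  refine Eq.trans ?_ Finset.sum_add_distrib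
  refine Finset.sum_congr rfl fun ε₁ _ => ?_
  refine Eq.trans ?_ Finset.sum_add_distrib
  refine Finset.sum_congr rfl fun ε₂ _ => ?_
  split_ifs <;> ring

lemma conv_addR (A B C : Submodule (ZMod 2) E)
    (f₁ : (X × X) × Dl E (A ⊓ B) → ℂ) (f₂ g₂ : (X × X) × Dl E (B ⊓ C) → ℂ) :
    conv E X A B C f₁ (f₂ + g₂) = conv E X A B C f₁ f₂ + conv E X A B C f₁ g₂ := by
  funext p
  simp only [conv_apply, Pi.add_apply]
  refine add_div_aux _ _ _ _ _ ?_
  refine Eq.trans ?_ Finset.sum_add_distrib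
  refine Finset.sum_congr rfl fun y _ => ?_
  refine Eq.trans ?_ Finset.sum_add_distrib
  refine Finset.sum_congr rfl fun ε₁ _ => ?_
  refine Eq.trans ?_ Finset.sum_add_distrib
  refine Finset.sum_congr rfl fun ε₂ _ => ?_
  split_ifs <;> ring

lemma conv_smulL (A B C : Submodule (ZMod 2) E) (c : ℂ)
    (f₁ : (X × X) × Dl E (A ⊓ B) → ℂ) (f₂ : (X × X) × Dl E (B ⊓ C) → ℂ) :
    conv E X A B C (c • f₁) f₂ = c • conv E X A B C f₁ f₂ := by
  funext p
  simp only [conv_apply, Pi.smul_apply, smul_eq_mul]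
  refine smul_div_aux _ _ _ _ _ ?_
  symm
  rw [Finset.mul_sum]
  refine Finset.sum_congr rfl fun y _ => ?_
  rw [Finset.mul_sum]
  refine Finset.sum_congr rfl fun ε₁ _ => ?_
  rw [Finset.mul_sum]
  refine Finset.sum_congr rfl fun ε₂ _ => ?_
  split_ifs <;> ring

lemma conv_smulR (A B C : Submodule (ZMod 2) E) (c : ℂ)
    (f₁ : (X × X) × Dl E (A ⊓ B) → ℂ) (f₂ : (X × X) × Dl E (B ⊓ C) → ℂ) :
    conv E X A B C f₁ (c • f₂) = c • conv E X A B C f₁ f₂ := by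
  funext p
  simp only [conv_apply, Pi.smul_apply, smul_eq_mul]
  refine smul_div_aux _ _ _ _ _ ?_
  symm
  rw [Finset.mul_sum]
  refine Finset.sum_congr rfl fun y _ => ?_
  rw [Finset.mul_sum]
  refine Finset.sum_congr rfl fun ε₁ _ => ?_
  rw [Finset.mul_sum]
  refine Finset.sum_congr rfl fun ε₂ _ => ?_
  split_ifs <;> ring

/-! ### The key invariance predicate -/

/-- The four invariance/support properties shared by all elements of the right
ideal, for a kernel in `𝓕_{AC}` relative to the datum `(o, B)`. -/
def Good (A B C : Submodule (ZMod 2) E) (o : Set X)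
    (b : (X × X) × Dl E (A ⊓ C) → ℂ) : Prop :=
  (∀ (x w : X) (ε : Dl E (A ⊓ C)), ¬(x ∈ o ∧ w ∈ XA E X C) → b ((x, w), ε) = 0) ∧
  (∀ (e : E) (x w : X) (ε : Dl E (A ⊓ C)),
    b ((e +ᵥ x, e +ᵥ w), ε) = b ((x, w), ε)) ∧
  (∀ b' ∈ B, ∀ (x w : X) (ε : Dl E (A ⊓ C)),
    b ((b' +ᵥ x, w), ε) = b ((x, w), ε)) ∧
  (∀ (x w : X) (ε ε' : Dl E (A ⊓ C)),
    res E (leAC E A B C) ε = res E (leAC E A B C) ε' →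
    b ((x, w), ε) = b ((x, w), ε'))

lemma orbEB_diag_iff {B : Submodule (ZMod 2) E} {x y : X} (e : E) (x' y' : X) :
    (e +ᵥ x', e +ᵥ y') ∈ orbEB E X B x y ↔ (x', y') ∈ orbEB E X B x y := by
  constructor
  · intro h
    have := orbEB_diag_mem E X h e
    rwa [vadd_vadd_self, vadd_vadd_self] at this
  · intro h
    exact orbEB_diag_mem E X h e

lemma orbEB_bvadd_iff {B : Submodule (ZMod 2) E} {x y : X} {b : E} (hb : b ∈ B)
    (x' y' : X) :
    (b +ᵥ x', y') ∈ orbEB E X B x y ↔ (x', y') ∈ orbEB E X B x y := by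
  constructor
  · intro h
    have := orbEB_bvadd_mem E X h hb
    rwa [vadd_vadd_self] at this
  · intro h
    exact orbEB_bvadd_mem E X h hb

lemma good_bSum (A B C : Submodule (ZMod 2) E) (o : Set X) (M : Set (X × X))
    (α : Dl E (A ⊓ B ⊓ C)) (hM : IsOrbEB E X A B C M) (hp : p1 X M = o) :
    Good E X A B C o (bSum E X A B C M α) := by
  obtain ⟨x₁, y₁, hx₁, hy₁, rfl⟩ := hM
  refine ⟨?_, ?_, ?_, ?_⟩
  · intro x w ε hxw
    rw [bSum_apply, if_neg]
    rintro ⟨hmem, -⟩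
    exact hxw ⟨hp ▸ mem_p1 X hmem, orbEB_snd_mem E X (A := A) hy₁ hmem⟩
  · intro e x w ε
    rw [bSum_apply, bSum_apply]
    by_cases h : (x, w) ∈ orbEB E X B x₁ y₁
    · rw [if_congr (and_congr_left' (iff_of_true ((orbEB_diag_iff E X e x w).2 h)
        h)) rfl rfl]
    · rw [if_congr (and_congr_left' (iff_of_false
        (fun hh => h ((orbEB_diag_iff E X e x w).1 hh)) h)) rfl rfl]
  · intro b' hb' x w ε
    rw [bSum_apply, bSum_apply]
    by_cases h : (x, w) ∈ orbEB E X B x₁ y₁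
    · rw [if_congr (and_congr_left' (iff_of_true ((orbEB_bvadd_iff E X hb' x w).2 h)
        h)) rfl rfl]
    · rw [if_congr (and_congr_left' (iff_of_false
        (fun hh => h ((orbEB_bvadd_iff E X hb' x w).1 hh)) h)) rfl rfl]
  · intro x w ε ε' hres
    rw [bSum_apply, bSum_apply, hres]

lemma orb2_diag_mem {x y x' y' : X} (h : (x', y') ∈ orb2 E X x y) (e : E) :
    (e +ᵥ x', e +ᵥ y') ∈ orb2 E X x y := by
  rw [← orb2_eq_of_mem E X h]
  exact ⟨e, rfl⟩

lemma orb2_diag_iff {x y : X} (e : E) (x' y' : X) :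
    (e +ᵥ x', e +ᵥ y') ∈ orb2 E X x y ↔ (x', y') ∈ orb2 E X x y := by
  constructor
  · intro h
    have := orb2_diag_mem E X h e
    rwa [vadd_vadd_self, vadd_vadd_self] at this
  · intro h
    exact orb2_diag_mem E X h e

lemma orb2_bvadd_mem {B : Submodule (ZMod 2) E} {x y : X} (hy : y ∈ XA E X B)
    {x' y' : X} (h : (x', y') ∈ orb2 E X x y) {b : E} (hb : b ∈ B) :
    (b +ᵥ x', y') ∈ orb2 E X x y := by
  obtain ⟨e, hq⟩ := h
  obtain ⟨hx', hy'⟩ : x' = e +ᵥ x ∧ y' = e +ᵥ y :=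
    ⟨congrArg Prod.fst hq, congrArg Prod.snd hq⟩
  subst hx'; subst hy'
  refine ⟨b + e, ?_⟩
  have h1 : (b + e) +ᵥ x = b +ᵥ (e +ᵥ x) := add_vadd b e x
  have h2 : (b + e) +ᵥ y = e +ᵥ y := by
    rw [add_comm, add_vadd, vadd_eq_self E X B hy hb]
  rw [Prod.mk.injEq, h1, h2]
  exact ⟨rfl, rfl⟩

lemma res_inj_BB (A B : Submodule (ZMod 2) E) {ε ε' : Dl E (A ⊓ B)}
    (h : res E (leAC E A B B) ε = res E (leAC E A B B) ε') : ε = ε' := by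
  ext u
  have hu : (u : E) ∈ A ⊓ B ⊓ B := ⟨u.2, u.2.2⟩
  have := congrArg (fun (m : Dl E (A ⊓ B ⊓ B)) => m ⟨u.1, hu⟩) h
  simp only [res_apply] at this
  convert this using 2

lemma good_br (A B : Submodule (ZMod 2) E) (o : Set X) (O : Set (X × X))
    (ε₁ : Dl E (A ⊓ B)) (hO : IsOrb2 E X A B O) (hp : p1 X O = o) :
    Good E X A B B o (br E X A B O ε₁) := by
  obtain ⟨x₀, y₀, hx₀, hy₀, rfl⟩ := hO
  refine ⟨?_, ?_, ?_, ?_⟩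
  · intro x w ε hxw
    rw [br_apply, if_neg]
    rintro ⟨hmem, -⟩
    exact hxw ⟨hp ▸ mem_p1 X hmem, orb2_snd_mem E X hy₀ hmem⟩
  · intro e x w ε
    rw [br_apply, br_apply]
    by_cases h : (x, w) ∈ orb2 E X x₀ y₀
    · rw [if_congr (and_congr_left' (iff_of_true ((orb2_diag_iff E X e x w).2 h)
        h)) rfl rfl]
    · rw [if_congr (and_congr_left' (iff_of_false
        (fun hh => h ((orb2_diag_iff E X e x w).1 hh)) h)) rfl rfl]
  · intro b' hb' x w ε
    rw [br_apply, br_apply]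
    by_cases h : (x, w) ∈ orb2 E X x₀ y₀
    · have h2 : (b' +ᵥ x, w) ∈ orb2 E X x₀ y₀ := orb2_bvadd_mem E X hy₀ h hb'
      rw [if_congr (and_congr_left' (iff_of_true h2 h)) rfl rfl]
    · have h2 : (b' +ᵥ x, w) ∉ orb2 E X x₀ y₀ := by
        intro hh
        have := orb2_bvadd_mem E X hy₀ hh hb'
        rw [vadd_vadd_self] at this
        exact h this
      rw [if_congr (and_congr_left' (iff_of_false h2 h)) rfl rfl]
  · intro x w ε ε' hres
    rw [res_inj_BB E A B hres]

lemma conv_apply' (A B C : Submodule (ZMod 2) E)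
    (f₁ : (X × X) × Dl E (A ⊓ B) → ℂ) (f₂ : (X × X) × Dl E (B ⊓ C) → ℂ)
    (x z : X) (ε : Dl E (A ⊓ C)) :
    conv E X A B C f₁ f₂ ((x, z), ε) =
      (∑ y : X, ∑ ε₁ : Dl E (A ⊓ B), ∑ ε₂ : Dl E (B ⊓ C),
        if y ∈ XA E X B ∧ res E (leAB E A B C) ε₁ + res E (leBC E A B C) ε₂
              + res E (leAC E A B C) ε = 0
        then f₁ ((x, y), ε₁) * f₂ ((y, z), ε₂) else 0) *
      (Nat.card ↥(A ⊓ B ⊓ C) : ℂ) / (Nat.card ↥(A ⊓ C) : ℂ) :=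
  conv_apply E X A B C f₁ f₂ ((x, z), ε)

lemma eq_div_aux (S T k k' : ℂ) (h : S = T) : S * k / k' = T * k / k' := by rw [h]

lemma dl_cancel_aux {P : Submodule (ZMod 2) E} (a b c c' : Dl E P) :
    a + (c + c') + b + c = a + b + c' := by
  have h1 : a + (c + c') + b + c = a + b + c' + (c + c) := by abel
  rw [h1, m2_add_self, add_zero]

/-- Multiplying a `Good` kernel by an element of `𝓕_{CD}` yields a `Good` kernel. -/
lemma good_conv (A B C D : Submodule (ZMod 2) E) (o : Set X)
    (b : (X × X) × Dl E (A ⊓ C) → ℂ) (hb : Good E X A B C o b)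
    (f : (X × X) × Dl E (C ⊓ D) → ℂ) (hf : MemF E X C D f) :
    Good E X A B D o (conv E X A C D b f) := by
  obtain ⟨hb1, hb2, hb3, hb4⟩ := hb
  obtain ⟨hf1, hf2⟩ := hf
  refine ⟨?_, ?_, ?_, ?_⟩
  · -- support condition
    intro x w ε hxw
    rw [conv_apply']
    rw [div_eq_zero_iff]
    left
    rw [mul_eq_zero]
    left
    refine Finset.sum_eq_zero fun z _ => Finset.sum_eq_zero fun ε₁ _ =>
      Finset.sum_eq_zero fun ε₂ _ => ?_
    rw [ite_eq_right_iff]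
    intro _
    by_cases hx : x ∈ o
    · have hw : w ∉ XA E X D := fun hw => hxw ⟨hx, hw⟩
      have : f ((z, w), ε₂) = 0 := by
        apply hf1
        intro hmem
        exact hw hmem.2
      rw [this, mul_zero]
    · have : b ((x, z), ε₁) = 0 := hb1 x z ε₁ fun hh => hx hh.1
      rw [this, zero_mul]
  · -- diagonal E-invariance
    intro e x w ε
    rw [conv_apply', conv_apply']
    refine eq_div_aux _ _ _ _ ?_
    refine (Fintype.sum_equiv (AddAction.toPerm e) _ _ fun z => ?_).symm
    simp only [AddAction.toPerm_apply]
    refine Finset.sum_congr rfl fun ε₁ _ => Finset.sum_congr rfl fun ε₂ _ => ?_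
    rw [hb2 e x z ε₁, hf2 e z w ε₂, mem_XA_vadd_iff]
  · -- B-invariance in the first variable
    intro b' hb' x w ε
    rw [conv_apply', conv_apply']
    refine eq_div_aux _ _ _ _ ?_
    refine Finset.sum_congr rfl fun z _ => Finset.sum_congr rfl fun ε₁ _ =>
      Finset.sum_congr rfl fun ε₂ _ => ?_
    rw [hb3 b' hb' x z ε₁]
  · -- dependence only on the restriction of ε to A ⊓ B ⊓ D
    intro x w ε ε' hres
    have hδ : ∀ (u : E) (hu : u ∈ A ⊓ B ⊓ D),
        (ε + ε') ⟨u, ⟨hu.1.1, hu.2⟩⟩ = 0 := by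
      intro u hu
      have h1 := congrArg (fun (m : Dl E (A ⊓ B ⊓ D)) => m ⟨u, hu⟩) hres
      simp only [res_apply] at h1
      have h2 : (ε + ε') ⟨u, ⟨hu.1.1, hu.2⟩⟩ =
          ε ⟨u, ⟨hu.1.1, hu.2⟩⟩ + ε' ⟨u, ⟨hu.1.1, hu.2⟩⟩ := rfl
      rw [h2]
      have h3 : ε ⟨u, ⟨hu.1.1, hu.2⟩⟩ = ε' ⟨u, ⟨hu.1.1, hu.2⟩⟩ := h1
      rw [h3, m2_add_self]
    obtain ⟨δ₁, hδ₁P, hδ₁Q⟩ := exists_delta E A B C D (ε + ε') hδ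
    rw [conv_apply', conv_apply']
    refine eq_div_aux _ _ _ _ ?_
    refine Finset.sum_congr rfl fun z _ => ?_
    refine (Fintype.sum_equiv (Equiv.addRight δ₁) _ _ fun ε₁ => ?_).symm
    simp only [Equiv.coe_addRight]
    refine Finset.sum_congr rfl fun ε₂ _ => ?_
    have hP : res E (leAB E A C D) (ε₁ + δ₁) + res E (leBC E A C D) ε₂
          + res E (leAC E A C D) ε
        = res E (leAB E A C D) ε₁ + res E (leBC E A C D) ε₂
          + res E (leAC E A C D) ε' := by
      rw [res_add, hδ₁Q, res_add]
      exact dl_cancel_aux E _ _ _ _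
    have hval : b ((x, z), ε₁ + δ₁) = b ((x, z), ε₁) := by
      apply hb4
      rw [res_add, hδ₁P, add_zero]
    simp only [hP, hval]

noncomputable instance : Fintype (Set (X × X)) := Fintype.ofFinite _

lemma emb_add (A B : Submodule (ZMod 2) E)
    (f g : (X × X) × Dl E (A ⊓ B) → ℂ) :
    emb E X A B (f + g) = emb E X A B f + emb E X A B g := by
  funext A' B' p
  by_cases h : A = A' ∧ B = B'
  · simp only [emb, dif_pos h, Pi.add_apply]
  · simp only [emb, dif_neg h, Pi.add_apply, add_zero]

lemma emb_smul (A B : Submodule (ZMod 2) E) (c : ℂ)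
    (f : (X × X) × Dl E (A ⊓ B) → ℂ) :
    emb E X A B (c • f) = c • emb E X A B f := by
  funext A' B' p
  by_cases h : A = A' ∧ B = B'
  · simp only [emb, dif_pos h, Pi.smul_apply]
  · simp only [emb, dif_neg h, Pi.smul_apply, smul_zero]

/-- `emb` as a linear map. -/
def embL (A B : Submodule (ZMod 2) E) :
    ((X × X) × Dl E (A ⊓ B) → ℂ) →ₗ[ℂ] FF E X where
  toFun := emb E X A B
  map_add' f g := emb_add E X A B f g
  map_smul' c f := emb_smul E X A B c f

/-- Decomposition: any `Good` kernel on `(A, D)` lies in `[[oB]]` after embedding. -/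
lemma decomp (A B D : Submodule (ZMod 2) E) (o : Set X)
    (ho : ∃ x ∈ XA E X A, o = orb E X x)
    (g : (X × X) × Dl E (A ⊓ D) → ℂ) (hg : Good E X A B D o g) :
    emb E X A D g ∈ ooB E X A B o := by
  obtain ⟨hg1, hg2, hg3, hg4⟩ := hg
  obtain ⟨x₀, hx₀, ho'⟩ := ho
  have hoXA : ∀ x ∈ o, x ∈ XA E X A := by
    rw [ho']; rintro x ⟨e, rfl⟩; exact vadd_mem_XA E X A hx₀ e
  have hoorb : ∀ x ∈ o, orb E X x = o := by
    rw [ho']; intro x hx; exact orb_eq_of_mem E X hx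
  classical
  set c : Set (X × X) → Dl E (A ⊓ B ⊓ D) → ℂ := fun M α =>
    if h : (IsOrbEB E X A B D M ∧ p1 X M = o) ∧
        ∃ ε : Dl E (A ⊓ D), res E (leAC E A B D) ε = α
    then g ((h.1.1.choose, h.1.1.choose_spec.choose), h.2.choose) else 0
    with hc
  have key : g = ∑ M : Set (X × X), ∑ α : Dl E (A ⊓ B ⊓ D),
      c M α • bSum E X A B D M α := by
    funext p
    obtain ⟨⟨x, w⟩, ε⟩ := p
    simp only [Finset.sum_apply, Pi.smul_apply, smul_eq_mul, bSum_apply]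
    by_cases hsupp : x ∈ o ∧ w ∈ XA E X D
    · obtain ⟨hx, hw⟩ := hsupp
      set M₀ : Set (X × X) := orbEB E X B x w with hM₀def
      set α₀ : Dl E (A ⊓ B ⊓ D) := res E (leAC E A B D) ε with hα₀def
      have hM₀ : IsOrbEB E X A B D M₀ := ⟨x, w, hoXA x hx, hw, rfl⟩
      have hp₀ : p1 X M₀ = o := by rw [hM₀def, p1_orbEB]; exact hoorb x hx
      have hcond : (IsOrbEB E X A B D M₀ ∧ p1 X M₀ = o) ∧
          ∃ ε' : Dl E (A ⊓ D), res E (leAC E A B D) ε' = α₀ :=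
        ⟨⟨hM₀, hp₀⟩, ⟨ε, rfl⟩⟩
      rw [Finset.sum_eq_single M₀]
      · rw [Finset.sum_eq_single α₀]
        · rw [if_pos ⟨mem_orbEB_self E X B x w, rfl⟩, mul_one, hc]
          simp only []
          rw [dif_pos hcond]
          -- identify the chosen data
          obtain ⟨hx', hw', hMeq⟩ := hcond.1.1.choose_spec.choose_spec
          set x' := hcond.1.1.choose
          set w' := hcond.1.1.choose_spec.choose
          set ε'' := hcond.2.choose with hε''def
          have hε'' : res E (leAC E A B D) ε'' = α₀ := hcond.2.choose_spec
          have hmem : (x, w) ∈ orbEB E X B x' w' := by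
            rw [← hMeq]; exact mem_orbEB_self E X B x w
          obtain ⟨e, b', hb', heq⟩ := hmem
          obtain ⟨h1, h2⟩ : x = (e + b') +ᵥ x' ∧ w = e +ᵥ w' :=
            ⟨congrArg Prod.fst heq, congrArg Prod.snd heq⟩
          rw [h1, h2]
          calc g (((e + b') +ᵥ x', e +ᵥ w'), ε)
              = g ((e +ᵥ (b' +ᵥ x'), e +ᵥ w'), ε) := by rw [add_vadd]
            _ = g ((b' +ᵥ x', w'), ε) := hg2 e _ _ ε
            _ = g ((x', w'), ε) := hg3 b' hb' _ _ ε
            _ = g ((x', w'), ε'') := hg4 _ _ ε ε'' (by rw [hε''])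
        · intro α _ hα
          rw [if_neg, mul_zero]
          rintro ⟨-, hres⟩
          exact hα (hres ▸ rfl)
        · intro hnm; exact absurd (Finset.mem_univ α₀) hnm
      · intro M _ hMne
        refine Finset.sum_eq_zero fun α _ => ?_
        by_cases hmem : (x, w) ∈ M ∧ res E (leAC E A B D) ε = α
        · have hc0 : c M α = 0 := by
            rw [hc]
            simp only []
            rw [dif_neg]
            rintro ⟨⟨hMo, hMp⟩, -⟩
            obtain ⟨x₁, y₁, hx₁, hy₁, hMeq⟩ := hMo
            apply hMne
            have : orbEB E X B x w = orbEB E X B x₁ y₁ :=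
              orbEB_eq_of_mem E X (hMeq ▸ hmem.1)
            rw [hM₀def, this, ← hMeq]
          rw [hc0, zero_mul]
        · rw [if_neg hmem, mul_zero]
      · intro hnm; exact absurd (Finset.mem_univ M₀) hnm
    · rw [hg1 x w ε hsupp]
      symm
      refine Finset.sum_eq_zero fun M _ => Finset.sum_eq_zero fun α _ => ?_
      by_cases hmem : (x, w) ∈ M ∧ res E (leAC E A B D) ε = α
      · have hc0 : c M α = 0 := by
          rw [hc]
          simp only []
          rw [dif_neg]
          rintro ⟨⟨hMo, hMp⟩, -⟩
          obtain ⟨x₁, y₁, hx₁, hy₁, hMeq⟩ := hMo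
          refine hsupp ⟨hMp ▸ mem_p1 X hmem.1, ?_⟩
          exact orbEB_snd_mem E X (A := A) hy₁ (hMeq ▸ hmem.1)
        rw [hc0, zero_mul]
      · rw [if_neg hmem, mul_zero]
  have hembeq : emb E X A D g = ∑ M : Set (X × X), ∑ α : Dl E (A ⊓ B ⊓ D),
      c M α • emb E X A D (bSum E X A B D M α) := by
    have h1 : emb E X A D g = embL E X A D g := rfl
    rw [h1, key, map_sum]
    refine Finset.sum_congr rfl fun M _ => ?_
    rw [map_sum]
    refine Finset.sum_congr rfl fun α _ => ?_
    rw [map_smul]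
    rfl
  rw [hembeq]
  refine Submodule.sum_mem _ fun M _ => Submodule.sum_mem _ fun α _ => ?_
  by_cases hMo : IsOrbEB E X A B D M ∧ p1 X M = o
  · refine Submodule.smul_mem _ _ (Submodule.subset_span ?_)
    exact Set.mem_iUnion.2 ⟨D, ⟨M, α, hMo.1, hMo.2, rfl⟩⟩
  · have hc0 : c M α = 0 := by
      rw [hc]
      simp only []
      rw [dif_neg]
      rintro ⟨h1, -⟩
      exact hMo h1
    rw [hc0, zero_smul]
    exact Submodule.zero_mem _

lemma emb_ne' {A B A' B' : Submodule (ZMod 2) E}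
    (f : (X × X) × Dl E (A ⊓ B) → ℂ) (h : ¬(A = A' ∧ B = B')) :
    emb E X A B f A' B' = 0 := by
  funext p
  rw [emb, dif_neg h]
  rfl

lemma mulFF_emb_eq (A C : Submodule (ZMod 2) E)
    (b : (X × X) × Dl E (A ⊓ C) → ℂ) (f : FF E X) :
    mulFF E X (emb E X A C b) f =
      ∑ D : Submodule (ZMod 2) E, emb E X A D (conv E X A C D b (f C D)) := by
  funext A' D'
  rw [Finset.sum_apply, Finset.sum_apply, mulFF_apply]
  by_cases hA : A = A'
  · subst hA
    rw [Finset.sum_eq_single C]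
    · rw [emb_same]
      symm
      rw [Finset.sum_eq_single D']
      · rw [emb_same]
      · intro D _ hD
        exact emb_ne' E X _ fun hh => hD hh.2
      · intro hnm; exact absurd (Finset.mem_univ D') hnm
    · intro B' _ hB'
      funext p
      refine conv_zeroL E X A B' D' ?_ (f B' D') p
      intro q
      exact congrFun (emb_ne' E X b fun hh => hB' hh.2.symm) q
    · intro hnm; exact absurd (Finset.mem_univ C) hnm
  · rw [Finset.sum_eq_zero, Finset.sum_eq_zero]
    · intro D _
      exact emb_ne' E X _ fun hh => hA hh.1
    · intro B' _
      funext p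
      refine conv_zeroL E X A' B' D' ?_ (f B' D') p
      intro q
      exact congrFun (emb_ne' E X b fun hh => hA hh.1) q

lemma mulFF_emb_good (A B C : Submodule (ZMod 2) E) (o : Set X)
    (ho : ∃ x ∈ XA E X A, o = orb E X x)
    (b : (X × X) × Dl E (A ⊓ C) → ℂ) (hb : Good E X A B C o b)
    (f : FF E X) (hf : f ∈ FFsub E X) :
    mulFF E X (emb E X A C b) f ∈ ooB E X A B o := by
  rw [mulFF_emb_eq]
  refine Submodule.sum_mem _ fun D _ => ?_
  exact decomp E X A B D o ho _ (good_conv E X A B C D o b hb (f C D) (hf C D))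

lemma mulFF_addL (g g' f : FF E X) :
    mulFF E X (g + g') f = mulFF E X g f + mulFF E X g' f := by
  funext A C
  have h2 : (mulFF E X g f + mulFF E X g' f) A C =
      mulFF E X g f A C + mulFF E X g' f A C := rfl
  rw [mulFF_apply, h2, mulFF_apply, mulFF_apply, ← Finset.sum_add_distrib]
  refine Finset.sum_congr rfl fun B _ => ?_
  have h1 : (g + g') A B = g A B + g' A B := rfl
  rw [h1]
  exact conv_addL E X A B C _ _ _

lemma mulFF_smulL (c : ℂ) (g f : FF E X) :
    mulFF E X (c • g) f = c • mulFF E X g f := by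
  funext A C
  have h2 : (c • mulFF E X g f) A C = c • mulFF E X g f A C := rfl
  rw [mulFF_apply, h2, mulFF_apply, Finset.smul_sum]
  refine Finset.sum_congr rfl fun B _ => ?_
  have h1 : (c • g) A B = c • g A B := rfl
  rw [h1]
  exact conv_smulL E X A B C c _ _

lemma mulFF_zeroL (f : FF E X) : mulFF E X (0 : FF E X) f = 0 := by
  funext A C
  rw [mulFF_apply]
  have h0 : (0 : FF E X) A C = 0 := rfl
  rw [h0]
  refine Finset.sum_eq_zero fun B _ => ?_
  funext p
  exact conv_zeroL E X A B C (fun q => rfl) (f B C) p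

/-- Part (1): `[[oB]]` is a right ideal. -/
lemma rightIdeal (A B : Submodule (ZMod 2) E) (o : Set X)
    (ho : ∃ x ∈ XA E X A, o = orb E X x) :
    ∀ m ∈ ooB E X A B o, ∀ f ∈ FFsub E X, mulFF E X m f ∈ ooB E X A B o := by
  intro m hm f hf
  refine Submodule.span_induction ?_ ?_ ?_ ?_ hm
  · intro v hv
    obtain ⟨C, hC⟩ := Set.mem_iUnion.1 hv
    obtain ⟨M, α, hMOrb, hMp, rfl⟩ := hC
    exact mulFF_emb_good E X A B C o ho _
      (good_bSum E X A B C o M α hMOrb hMp) f hf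
  · rw [mulFF_zeroL]; exact Submodule.zero_mem _
  · intro u v _ _ hu hv
    rw [mulFF_addL]; exact Submodule.add_mem _ hu hv
  · intro a u _ hu
    rw [mulFF_smulL]; exact Submodule.smul_mem _ a hu

lemma m2_eq_iff {M : Type*} [AddCommGroup M] [Module (ZMod 2) M] (a b : M) :
    a + b = 0 ↔ a = b := by
  constructor
  · intro h
    have h1 : a + (b + b) = a := by rw [m2_add_self, add_zero]
    have h2 : a + (b + b) = (a + b) + b := by abel
    rw [← h1, h2, h, zero_add]
  · intro h; rw [h, m2_add_self]

lemma stab_mem_of_vadd_eq {A : Submodule (ZMod 2) E} {x : X}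
    (hx : x ∈ XA E X A) {e₁ e₂ : E} (h : e₁ +ᵥ x = e₂ +ᵥ x) :
    e₁ + e₂ ∈ A := by
  have h1 : (e₁ + e₂) +ᵥ x = x := by
    rw [add_vadd, ← h, vadd_vadd_self]
  have h2 : e₁ + e₂ ∈ stabSet E X x := h1
  rw [XA, Set.mem_setOf_eq] at hx
  rw [hx] at h2
  exact h2

lemma orbEB_base_change (B : Submodule (ZMod 2) E) (x z₁ : X) (u : E) :
    orbEB E X B (u +ᵥ x) z₁ = orbEB E X B x (u +ᵥ z₁) := by
  ext ⟨s, t⟩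
  constructor
  · rintro ⟨e, b, hb, hq⟩
    refine ⟨e + u, b, hb, ?_⟩
    obtain ⟨h1, h2⟩ : s = (e + b) +ᵥ (u +ᵥ x) ∧ t = e +ᵥ z₁ :=
      ⟨congrArg Prod.fst hq, congrArg Prod.snd hq⟩
    rw [h1, h2]
    congr 1
    · rw [← add_vadd]; congr 1; abel
    · rw [← add_vadd]
      congr 1
      have : e + u + u = e + (u + u) := by abel
      rw [this, m2_add_self, add_zero]
  · rintro ⟨e, b, hb, hq⟩
    refine ⟨e + u, b, hb, ?_⟩
    obtain ⟨h1, h2⟩ : s = (e + b) +ᵥ x ∧ t = e +ᵥ (u +ᵥ z₁) :=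
      ⟨congrArg Prod.fst hq, congrArg Prod.snd hq⟩
    rw [h1, h2]
    congr 1
    · rw [← add_vadd]
      congr 1
      have : e + u + b + u = e + b + (u + u) := by abel
      rw [this, m2_add_self, add_zero]
    · rw [← add_vadd]

lemma card_pos_ne_zero {τ : Type*} [Finite τ] (t : τ) :
    (Nat.card τ : ℂ) ≠ 0 := by
  have : 0 < Nat.card τ := Nat.card_pos_iff.2 ⟨⟨t⟩, inferInstance⟩
  exact_mod_cast this.ne'

lemma kappa_arith (a b c d : ℂ) (h1 : a ≠ 0) (h2 : b ≠ 0) (h3 : c ≠ 0)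
    (h4 : d ≠ 0) : a * (b * (d / (c * b * a))) * c / d = 1 := by
  field_simp

set_option maxHeartbeats 1000000 in
lemma exists_preimage (A B C : Submodule (ZMod 2) E) (o : Set X)
    (x y : X) (hx : x ∈ XA E X A) (hy : y ∈ XA E X B) (hOp : orb E X x = o)
    (M : Set (X × X)) (α : Dl E (A ⊓ B ⊓ C)) (hM : IsOrbEB E X A B C M)
    (hMp : p1 X M = o) (ε₁ : Dl E (A ⊓ B)) :
    ∃ f₀ : (X × X) × Dl E (B ⊓ C) → ℂ, MemF E X B C f₀ ∧
      conv E X A B C (br E X A B (orb2 E X x y) ε₁) f₀ = bSum E X A B C M α := by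
  classical
  obtain ⟨x₁, z₁, hx₁, hz₁, hMeq⟩ := hM
  have hx₁o : x₁ ∈ orb E X x := by
    rw [hOp, ← hMp, hMeq, p1_orbEB]
    exact mem_orb_self E X x₁
  obtain ⟨u, hu⟩ := hx₁o
  set z₀ : X := u +ᵥ z₁ with hz₀def
  have hz₀ : z₀ ∈ XA E X C := vadd_mem_XA E X C hz₁ u
  have hM' : M = orbEB E X B x z₀ := by
    rw [hMeq, hu, orbEB_base_change, ← hz₀def]
  set N : Set (X × X) := {q | ∃ e a : E, a ∈ A ∧ q = (e +ᵥ y, (e + a) +ᵥ z₀)}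
    with hNdef
  set β : Dl E (A ⊓ B ⊓ C) := res E (leAB E A B C) ε₁ + α with hβdef
  set S : Set X := {v | ∃ a ∈ A, v = a +ᵥ y} with hSdef
  set nY : ℕ := S.ncard with hnYdef
  set n₂ : ℕ := Nat.card {ε₂ : Dl E (B ⊓ C) // res E (leBC E A B C) ε₂ = β}
    with hn₂def
  set κ : ℂ := (Nat.card ↥(A ⊓ C) : ℂ) /
    ((Nat.card ↥(A ⊓ B ⊓ C) : ℂ) * (n₂ : ℂ) * (nY : ℂ)) with hκdef
  have hkAC : (Nat.card ↥(A ⊓ C) : ℂ) ≠ 0 := card_pos_ne_zero (0 : ↥(A ⊓ C))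
  have hkABC : (Nat.card ↥(A ⊓ B ⊓ C) : ℂ) ≠ 0 :=
    card_pos_ne_zero (0 : ↥(A ⊓ B ⊓ C))
  have hn₂0 : (n₂ : ℂ) ≠ 0 := by
    obtain ⟨ψ, hψ⟩ := resSurj E (leBC E A B C) β
    rw [hn₂def]
    exact card_pos_ne_zero
      (⟨ψ, hψ⟩ : {ε₂ : Dl E (B ⊓ C) // res E (leBC E A B C) ε₂ = β})
  have hnY0 : (nY : ℂ) ≠ 0 := by
    rw [hnYdef, ← Nat.card_coe_set_eq]
    exact card_pos_ne_zero (⟨y, ⟨0, zero_mem A, (zero_vadd E y).symm⟩⟩ : ↥S)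
  set f₀ : (X × X) × Dl E (B ⊓ C) → ℂ :=
    fun p => if p.1 ∈ N ∧ res E (leBC E A B C) p.2 = β then κ else 0 with hf₀def
  have hf₀app : ∀ (q : X × X) (ε₂ : Dl E (B ⊓ C)),
      f₀ (q, ε₂) = if q ∈ N ∧ res E (leBC E A B C) ε₂ = β then κ else 0 :=
    fun q ε₂ => rfl
  have hNdiag : ∀ (e : E) (q₁ q₂ : X),
      (e +ᵥ q₁, e +ᵥ q₂) ∈ N ↔ (q₁, q₂) ∈ N := by
    intro e q₁ q₂
    constructor
    · rintro ⟨e', a, ha, heq⟩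
      obtain ⟨h1, h2⟩ : e +ᵥ q₁ = e' +ᵥ y ∧ e +ᵥ q₂ = (e' + a) +ᵥ z₀ :=
        ⟨congrArg Prod.fst heq, congrArg Prod.snd heq⟩
      refine ⟨e + e', a, ha, ?_⟩
      have h1' : q₁ = (e + e') +ᵥ y := by
        rw [add_vadd, ← h1, vadd_vadd_self]
      have h2' : q₂ = ((e + e') + a) +ᵥ z₀ := by
        have : (e + e') + a = e + (e' + a) := by abel
        rw [this, add_vadd, ← h2, vadd_vadd_self]
      rw [← h1', ← h2']
    · rintro ⟨e', a, ha, heq⟩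
      obtain ⟨h1, h2⟩ : q₁ = e' +ᵥ y ∧ q₂ = (e' + a) +ᵥ z₀ :=
        ⟨congrArg Prod.fst heq, congrArg Prod.snd heq⟩
      refine ⟨e + e', a, ha, ?_⟩
      have h1' : e +ᵥ q₁ = (e + e') +ᵥ y := by rw [h1, add_vadd]
      have h2' : e +ᵥ q₂ = ((e + e') + a) +ᵥ z₀ := by
        rw [h2, ← add_vadd]
        congr 1
        abel
      rw [h1', h2']
  -- the condition translation
  have hRC : ∀ (ε : Dl E (A ⊓ C)) (ε₂ : Dl E (B ⊓ C)),
      res E (leBC E A B C) ε₂ = β →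
      (res E (leAB E A B C) ε₁ + res E (leBC E A B C) ε₂
          + res E (leAC E A B C) ε = 0 ↔ res E (leAC E A B C) ε = α) := by
    intro ε ε₂ hβ'
    rw [hβ', hβdef]
    have hre : res E (leAB E A B C) ε₁ + (res E (leAB E A B C) ε₁ + α)
        + res E (leAC E A B C) ε = α + res E (leAC E A B C) ε := by
      have h9 : res E (leAB E A B C) ε₁ + (res E (leAB E A B C) ε₁ + α)
          + res E (leAC E A B C) ε
          = (α + res E (leAC E A B C) ε)
            + (res E (leAB E A B C) ε₁ + res E (leAB E A B C) ε₁) := by abel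
      rw [h9, m2_add_self, add_zero]
    rw [hre, m2_eq_iff]
    exact eq_comm
  refine ⟨f₀, ⟨?_, ?_⟩, ?_⟩
  · -- support
    intro p hp
    rw [hf₀def]
    simp only []
    rw [if_neg]
    rintro ⟨hN', -⟩
    obtain ⟨e, a, ha, heq⟩ := hN'
    apply hp
    rw [X2, heq]
    exact Set.mem_prod.2 ⟨vadd_mem_XA E X B hy e, vadd_mem_XA E X C hz₀ (e + a)⟩
  · -- diagonal invariance
    intro e q₁ q₂ ε₂
    show (if (e +ᵥ q₁, e +ᵥ q₂) ∈ N ∧ res E (leBC E A B C) ε₂ = β then κ else 0)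
      = if (q₁, q₂) ∈ N ∧ res E (leBC E A B C) ε₂ = β then κ else 0
    rw [if_congr (and_congr_left' (hNdiag e q₁ q₂)) rfl rfl]
  · -- the main computation
    funext p
    obtain ⟨⟨x', z'⟩, ε⟩ := p
    rw [conv_apply', bSum_apply]
    by_cases hα : res E (leAC E A B C) ε = α
    · -- per-y' evaluation
      have hY : ∀ y' : X, (∑ ε₁' : Dl E (A ⊓ B), ∑ ε₂ : Dl E (B ⊓ C),
          if y' ∈ XA E X B ∧ res E (leAB E A B C) ε₁' + res E (leBC E A B C) ε₂
                + res E (leAC E A B C) ε = 0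
          then br E X A B (orb2 E X x y) ε₁ ((x', y'), ε₁') * f₀ ((y', z'), ε₂)
          else 0)
          = if (x', y') ∈ orb2 E X x y ∧ (y', z') ∈ N then (n₂ : ℂ) * κ
            else 0 := by
        intro y'
        by_cases hON : (x', y') ∈ orb2 E X x y ∧ (y', z') ∈ N
        · rw [if_pos hON]
          have hyB : y' ∈ XA E X B := orb2_snd_mem E X hy hON.1
          refine (Finset.sum_eq_single ε₁ ?_ ?_).trans ?_
          · intro c _ hc
            refine Finset.sum_eq_zero fun ε₂ _ => ?_
            rw [ite_eq_right_iff]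
            intro _
            rw [br_apply, if_neg fun hh => hc hh.2, zero_mul]
          · intro hn; exact absurd (Finset.mem_univ ε₁) hn
          · have hbr1 : br E X A B (orb2 E X x y) ε₁ ((x', y'), ε₁) = 1 := by
              rw [br_apply, if_pos ⟨hON.1, rfl⟩]
            have hinner : (∑ ε₂ : Dl E (B ⊓ C),
                if res E (leBC E A B C) ε₂ = β then κ else 0) = (n₂ : ℂ) * κ := by
              rw [hn₂def]
              exact sum_indicator_count (fun ε₂ => res E (leBC E A B C) ε₂ = β) κ
            refine Eq.trans (Finset.sum_congr rfl fun ε₂ _ => ?_) hinner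
            show _ = if res E (leBC E A B C) ε₂ = β then κ else 0
            by_cases hβ' : res E (leBC E A B C) ε₂ = β
            · rw [if_pos hβ', if_pos ⟨hyB, (hRC ε ε₂ hβ').2 hα⟩, hbr1, one_mul,
                hf₀app, if_pos ⟨hON.2, hβ'⟩]
            · rw [if_neg hβ', ite_eq_right_iff]
              intro _
              rw [hf₀app, if_neg fun hh => hβ' hh.2, mul_zero]
        · rw [if_neg hON]
          refine Finset.sum_eq_zero fun ε₁' _ => Finset.sum_eq_zero fun ε₂ _ => ?_
          rw [ite_eq_right_iff]
          intro _
          by_cases hO' : (x', y') ∈ orb2 E X x y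
          · have hN' : (y', z') ∉ N := fun hn => hON ⟨hO', hn⟩
            rw [hf₀app, if_neg fun hh => hN' hh.1, mul_zero]
          · rw [br_apply, if_neg fun hh => hO' hh.1, zero_mul]
      have h2 := Finset.sum_congr rfl fun (y' : X) (_ : y' ∈ Finset.univ) => hY y'
      have hcount : (∑ y' : X,
          if (x', y') ∈ orb2 E X x y ∧ (y', z') ∈ N then (n₂ : ℂ) * κ else 0)
          = (Nat.card {y' : X // (x', y') ∈ orb2 E X x y ∧ (y', z') ∈ N} : ℂ)
            * ((n₂ : ℂ) * κ) :=
        sum_indicator_count (fun y' => (x', y') ∈ orb2 E X x y ∧ (y', z') ∈ N) _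
      rw [h2, hcount]
      by_cases hMmem : (x', z') ∈ M
      · rw [if_pos ⟨hMmem, hα⟩]
        have hMx : (x', z') ∈ orbEB E X B x z₀ := hM' ▸ hMmem
        obtain ⟨e, b, hb, heq⟩ := hMx
        obtain ⟨hx', hz'⟩ : x' = (e + b) +ᵥ x ∧ z' = e +ᵥ z₀ :=
          ⟨congrArg Prod.fst heq, congrArg Prod.snd heq⟩
        have h3 : {y' : X | (x', y') ∈ orb2 E X x y ∧ (y', z') ∈ N}
            = (fun v => e +ᵥ v) '' S := by
          ext y'
          simp only [Set.mem_setOf_eq, Set.mem_image]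
          constructor
          · rintro ⟨⟨e', hOeq⟩, -⟩
            obtain ⟨h5, h6⟩ : x' = e' +ᵥ x ∧ y' = e' +ᵥ y :=
              ⟨congrArg Prod.fst hOeq, congrArg Prod.snd hOeq⟩
            have ha₀ : e' + (e + b) ∈ A :=
              stab_mem_of_vadd_eq E X hx (by rw [← h5, hx'])
            refine ⟨(e' + (e + b)) +ᵥ y, ⟨e' + (e + b), ha₀, rfl⟩, ?_⟩
            rw [← add_vadd]
            have h7 : e + (e' + (e + b)) = (e' + b) + (e + e) := by abel
            rw [h7, m2_add_self, add_zero, add_vadd, vadd_eq_self E X B hy hb]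
            exact h6.symm
          · rintro ⟨v, ⟨a, ha, rfl⟩, rfl⟩
            constructor
            · refine ⟨e + b + a, ?_⟩
              rw [Prod.mk.injEq]
              constructor
              · rw [hx', add_vadd (e + b) a x, vadd_eq_self E X A hx ha]
              · rw [← add_vadd]
                have h8 : (e + b + a) +ᵥ y = (e + a) +ᵥ y := by
                  have h7 : e + b + a = (e + a) + b := by abel
                  rw [h7, add_vadd, vadd_eq_self E X B hy hb]
                rw [h8]
            · refine ⟨e + a, a, ha, ?_⟩
              rw [Prod.mk.injEq]
              constructor
              · rw [← add_vadd]
              · rw [hz']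
                have h7 : (e + a) + a = e + (a + a) := by abel
                rw [h7, m2_add_self, add_zero]
        have h4 : Nat.card {y' : X // (x', y') ∈ orb2 E X x y ∧ (y', z') ∈ N}
            = nY := by
          refine (Nat.card_coe_set_eq _).trans ?_
          show ({y' : X | (x', y') ∈ orb2 E X x y ∧ (y', z') ∈ N}).ncard = nY
          rw [h3, Set.ncard_image_of_injective S
            (fun a b hab => vadd_left_cancel e hab), hnYdef]
        rw [h4, hκdef]
        exact kappa_arith _ _ _ _ hnY0 hn₂0 hkABC hkAC
      · rw [if_neg fun hh => hMmem hh.1]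
        have hempty : ∀ y' : X,
            ¬((x', y') ∈ orb2 E X x y ∧ (y', z') ∈ N) := by
          rintro y' ⟨⟨e', hOeq⟩, ⟨e2, a2, ha2, hNeq⟩⟩
          obtain ⟨h5, h6⟩ : x' = e' +ᵥ x ∧ y' = e' +ᵥ y :=
            ⟨congrArg Prod.fst hOeq, congrArg Prod.snd hOeq⟩
          obtain ⟨h7, h8⟩ : y' = e2 +ᵥ y ∧ z' = (e2 + a2) +ᵥ z₀ :=
            ⟨congrArg Prod.fst hNeq, congrArg Prod.snd hNeq⟩
          apply hMmem
          rw [hM']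
          have hbB : e2 + e' ∈ B :=
            stab_mem_of_vadd_eq E X hy (by rw [← h7, h6])
          refine ⟨e2 + a2, e2 + e', hbB, ?_⟩
          rw [Prod.mk.injEq]
          constructor
          · have h9 : (e2 + a2) + (e2 + e') = (e' + a2) + (e2 + e2) := by abel
            rw [h9, m2_add_self, add_zero, add_vadd, vadd_eq_self E X A hx ha2]
            exact h5
          · exact h8
        haveI : IsEmpty {y' : X // (x', y') ∈ orb2 E X x y ∧ (y', z') ∈ N} :=
          ⟨fun y' => hempty y'.1 y'.2⟩
        rw [Nat.card_of_isEmpty, Nat.cast_zero, zero_mul, zero_mul, zero_div]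
    · -- the restriction of ε is not α : everything vanishes
      rw [if_neg fun hh => hα hh.2, div_eq_zero_iff]
      left
      rw [mul_eq_zero]
      left
      refine Finset.sum_eq_zero fun y' _ => Finset.sum_eq_zero fun ε₁' _ =>
        Finset.sum_eq_zero fun ε₂ _ => ?_
      rw [ite_eq_right_iff]
      intro hcond
      by_cases hbr : (x', y') ∈ orb2 E X x y ∧ ε₁' = ε₁
      · obtain ⟨-, rfl⟩ := hbr
        by_cases hf : (y', z') ∈ N ∧ res E (leBC E A B C) ε₂ = β
        · exact absurd ((hRC ε ε₂ hf.2).1 hcond.2) hα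
        · rw [hf₀app, if_neg hf, mul_zero]
      · rw [br_apply, if_neg hbr, zero_mul]

lemma mulFF_addR (g f f' : FF E X) :
    mulFF E X g (f + f') = mulFF E X g f + mulFF E X g f' := by
  funext A C
  have h2 : (mulFF E X g f + mulFF E X g f') A C =
      mulFF E X g f A C + mulFF E X g f' A C := rfl
  rw [mulFF_apply, h2, mulFF_apply, mulFF_apply, ← Finset.sum_add_distrib]
  refine Finset.sum_congr rfl fun B _ => ?_
  have h1 : (f + f') B C = f B C + f' B C := rfl
  rw [h1]
  exact conv_addR E X A B C _ _ _

lemma mulFF_smulR (c : ℂ) (g f : FF E X) :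
    mulFF E X g (c • f) = c • mulFF E X g f := by
  funext A C
  have h2 : (c • mulFF E X g f) A C = c • mulFF E X g f A C := rfl
  rw [mulFF_apply, h2, mulFF_apply, Finset.smul_sum]
  refine Finset.sum_congr rfl fun B _ => ?_
  have h1 : (c • f) B C = c • f B C := rfl
  rw [h1]
  exact conv_smulR E X A B C c _ _

/-- Left multiplication by a fixed element, as a linear map. -/
def TL (g : FF E X) : FF E X →ₗ[ℂ] FF E X where
  toFun f := mulFF E X g f
  map_add' f f' := mulFF_addR E X g f f'
  map_smul' c f := mulFF_smulR E X c g f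

lemma emb_zero (A B : Submodule (ZMod 2) E) :
    emb E X A B (fun _ => 0) = 0 :=
  map_zero (embL E X A B)

lemma emb_mem_FFsub (A B : Submodule (ZMod 2) E)
    (f : (X × X) × Dl E (A ⊓ B) → ℂ) (hf : MemF E X A B f) :
    emb E X A B f ∈ FFsub E X := by
  intro A' B'
  by_cases h : A = A' ∧ B = B'
  · obtain ⟨rfl, rfl⟩ := h
    rw [emb_same]
    exact hf
  · rw [emb_ne' E X f h]
    exact ⟨fun p _ => rfl, fun e x y ε => rfl⟩
/-- Theorem 1.6(a): `[[oB]]` is a right ideal of `(𝓕, ⋆)`; more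
precisely `[[oB]] = [𝒪]^{ε₁} ⋆ 𝓕` for any `E`-orbit `𝒪 ⊆ X²_{AB}` with `p₁𝒪 = o`
and any `ε₁ ∈ (A∩B)*`. -/
theorem statement13 (A B : Submodule (ZMod 2) E) (o : Set X)
    (ho : ∃ x ∈ XA E X A, o = orb E X x) :
    (∀ m ∈ ooB E X A B o, ∀ f ∈ FFsub E X, mulFF E X m f ∈ ooB E X A B o) ∧
    ∀ O : Set (X × X), IsOrb2 E X A B O → p1 X O = o → ∀ ε₁ : Dl E (A ⊓ B),
      (ooB E X A B o : Set (FF E X)) =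
        (fun f => mulFF E X (emb E X A B (br E X A B O ε₁)) f) ''
          (FFsub E X : Set (FF E X)) := by
  constructor
  · exact rightIdeal E X A B o ho
  · intro O hO hOp ε₁
    obtain ⟨x, y, hx, hy, rfl⟩ := hO
    have horb : orb E X x = o := by rw [← p1_orb2 E X x y]; exact hOp
    apply Set.Subset.antisymm
    · -- [[oB]] ⊆ image
      intro m hm
      have hle : ooB E X A B o ≤ Submodule.map
          (TL E X (emb E X A B (br E X A B (orb2 E X x y) ε₁))) (FFsub E X) := by
        apply Submodule.span_le.2
        rintro v hv
        obtain ⟨C, hC⟩ := Set.mem_iUnion.1 hv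
        obtain ⟨M, α, hMOrb, hMp, rfl⟩ := hC
        obtain ⟨f₀, hf₀mem, hf₀eq⟩ :=
          exists_preimage E X A B C o x y hx hy horb M α hMOrb hMp ε₁
        refine ⟨emb E X B C f₀, emb_mem_FFsub E X B C f₀ hf₀mem, ?_⟩
        show mulFF E X (emb E X A B (br E X A B (orb2 E X x y) ε₁))
            (emb E X B C f₀) = emb E X A C (bSum E X A B C M α)
        rw [mulFF_emb_eq]
        rw [Finset.sum_eq_single C]
        · rw [emb_same, hf₀eq]
        · intro D _ hD
          have hzero : emb E X B C f₀ B D = 0 :=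
            emb_ne' E X f₀ fun hh => hD hh.2.symm
          have hc : conv E X A B D (br E X A B (orb2 E X x y) ε₁)
              (emb E X B C f₀ B D) = fun _ => 0 :=
            funext fun p => conv_zeroR E X A B D _
              (fun q => by rw [hzero]; rfl) p
          rw [hc]
          exact emb_zero E X A D
        · intro hnm; exact absurd (Finset.mem_univ C) hnm
      obtain ⟨f, hf, hTf⟩ := hle hm
      exact ⟨f, hf, hTf⟩
    · -- image ⊆ [[oB]]
      rintro m ⟨f, hf, rfl⟩
      exact mulFF_emb_good E X A B B o ho _
        (good_br E X A B o _ ε₁ ⟨x, y, hx, hy, rfl⟩ hOp) f hf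

end Lusztig
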